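/- Every uniformly computable family of binary sequences is learnable by a single computable predictor: for every computable function g : ℕ → ℕ → Bool (computable as a function of the pair of arguments), there exists a computable predictor p : List Bool → Bool such that for every ω : ℕ → Bool, if there exists k with ω = g k, then p learns to predict ω. -/

import Mathlib

/-- The length-`n` prefix `[ω 0, …, ω (n−1)]` of a binary sequence `ω`. -/
def prefixList (ω : ℕ → Bool) (n : ℕ) : List Bool := (List.range n).map ω

/-- A predictor `p` learns to predict the sequence `ω` if from some point on it
always predicts the next symbol correctly. -/
def LearnsToPredict (p : List Bool → Bool) (ω : ℕ → Bool) : Prop :=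
  ∃ m : ℕ, ∀ n ≥ m, p (prefixList ω n) = ω n

lemma prefixList_eq_iff (α β : ℕ → Bool) (n : ℕ) :
    prefixList α n = prefixList β n ↔ ∀ i < n, α i = β i := by
  constructor
  · intro h i hi
    have := congrArg (fun l => l.getD i false) h
    simpa [prefixList, List.getD, List.getElem?_map, List.getElem?_range hi] using this
  · intro h
    apply List.ext_getElem
    · simp [prefixList]
    · intro i h1 h2
      simp only [prefixList, List.getElem_map, List.getElem_range]
      exact h i (by simpa [prefixList] using h1)

@[simp] lemma prefixList_length (ω : ℕ → Bool) (n : ℕ) : (prefixList ω n).length = n := by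
  simp [prefixList]

lemma prefixList_succ (ω : ℕ → Bool) (n : ℕ) :
    prefixList ω (n + 1) = prefixList ω n ++ [ω n] := by
  simp [prefixList, List.range_succ]

/-- The search: least `j < N` whose sequence is consistent with `l`. -/
def searchAux (g : ℕ → ℕ → Bool) (l : List Bool) : ℕ → Option ℕ
  | 0 => Option.none
  | N + 1 => (searchAux g l N).or
      (if prefixList (g N) l.length = l then Option.some N else Option.none)

lemma searchAux_none (g : ℕ → ℕ → Bool) (l : List Bool) :
    ∀ N, searchAux g l N = none ↔ ∀ i < N, prefixList (g i) l.length ≠ l := by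
  intro N
  induction N with
  | zero => simp [searchAux]
  | succ N ih =>
    rw [searchAux]
    rcases h' : searchAux g l N with _ | j
    · simp only [Option.none_or]
      by_cases hb : prefixList (g N) l.length = l
      · rw [if_pos hb]
        constructor
        · intro h; simp at h
        · intro h
          exact absurd hb (h N (Nat.lt_succ_self N))
      · rw [if_neg hb]
        constructor
        · intro _ i hi
          rcases Nat.lt_or_ge i N with h1 | h1
          · exact ih.mp h' i h1
          · have : i = N := by omega
            subst this
            exact hb
        · intro _; rfl
    · constructor
      · intro h; simp [Option.or] at h
      · intro hall
        have := ih.mpr fun i hi => hall i (by omega)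
        rw [h'] at this
        simp at this

lemma searchAux_sound (g : ℕ → ℕ → Bool) (l : List Bool) :
    ∀ N j, searchAux g l N = some j →
      j < N ∧ prefixList (g j) l.length = l ∧ ∀ i < j, prefixList (g i) l.length ≠ l := by
  intro N
  induction N with
  | zero => intro j h; simp [searchAux] at h
  | succ N ih =>
    intro j h
    rw [searchAux] at h
    rcases hN : searchAux g l N with _ | j'
    · rw [hN] at h
      simp only [Option.none_or] at h
      by_cases hb : prefixList (g N) l.length = l
      · rw [if_pos hb] at h
        simp only [Option.some.injEq] at h
        subst h
        exact ⟨Nat.lt_succ_self N, hb,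
          fun i hi => (searchAux_none g l N).mp hN i (by omega)⟩
      · rw [if_neg hb] at h
        simp at h
    · rw [hN] at h
      have hj : j' = j := by simpa [Option.or] using h
      subst hj
      obtain ⟨h1, h2, h3⟩ := ih j' hN
      exact ⟨Nat.lt_succ_of_lt h1, h2, h3⟩

lemma searchAux_isSome (g : ℕ → ℕ → Bool) (l : List Bool) (N : ℕ)
    (h : ∃ i < N, prefixList (g i) l.length = l) : (searchAux g l N).isSome := by
  rcases h' : searchAux g l N with _ | j
  · obtain ⟨i, hi, hc⟩ := h
    exact absurd hc ((searchAux_none g l N).mp h' i hi)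
  · rfl

/-- The predictor. -/
def predictor (g : ℕ → ℕ → Bool) (l : List Bool) : Bool :=
  (searchAux g l (l.length + 1)).elim false (fun j => g j l.length)

/-- Every uniformly computable family of binary sequences is learnable by a
single computable predictor. -/
theorem stmt_5 :
    ∀ g : ℕ → ℕ → Bool, Computable (fun x : ℕ × ℕ => g x.1 x.2) →
      ∃ p : List Bool → Bool, Computable p ∧
        ∀ ω : ℕ → Bool, (∃ k : ℕ, ω = g k) → LearnsToPredict p ω := by
  intro g hg
  refine ⟨predictor g, ?_, ?_⟩
  · -- computability
    have keypre : ∀ (j n : ℕ),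
        (Nat.rec ([] : List Bool) (fun y IH => IH ++ [g j y]) n) = prefixList (g j) n := by
      intro j n
      induction n with
      | zero => rfl
      | succ n ih => rw [prefixList_succ, ← ih]
    have hpre : Computable (fun x : ℕ × ℕ => prefixList (g x.1) x.2) := by
      have := Computable.nat_rec (f := fun x : ℕ × ℕ => x.2)
        (g := fun _ : ℕ × ℕ => ([] : List Bool))
        (h := fun (x : ℕ × ℕ) (y : ℕ × List Bool) => y.2 ++ [g x.1 y.1])
        Computable.snd (Computable.const [])
        (Computable.list_concat.comp (Computable.snd.comp Computable.snd)
          (hg.comp (Computable.pair (Computable.fst.comp Computable.fst)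
            (Computable.fst.comp Computable.snd)))).to₂
      exact this.of_eq fun x => keypre x.1 x.2
    have keysearch : ∀ (l : List Bool) (N : ℕ),
        (Nat.rec (Option.none : Option ℕ)
          (fun y IH => IH.or (if prefixList (g y) l.length = l
            then Option.some y else Option.none)) N) = searchAux g l N := by
      intro l N
      induction N with
      | zero => rfl
      | succ N ih => rw [searchAux, ← ih]
    have hsearch : Computable (fun l : List Bool => searchAux g l (l.length + 1)) := by
      have h0 : Computable (fun p : Option ℕ × Option ℕ =>
          (Option.casesOn p.1 p.2 some : Option ℕ)) :=
        Computable.option_casesOn Computable.fst Computable.snd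
          (Computable.option_some.comp Computable.snd).to₂
      have hor : Computable₂ (fun (o₁ o₂ : Option ℕ) => o₁.or o₂) :=
        h0.of_eq fun p => by rcases hp : p.1 <;> simp [hp, Option.or]
      have hcond : Computable (fun p : List Bool × (ℕ × Option ℕ) =>
          (if prefixList (g p.2.1) p.1.length = p.1
            then Option.some p.2.1 else Option.none : Option ℕ)) := by
        have hbeq : Computable (fun p : List Bool × (ℕ × Option ℕ) =>
            decide (prefixList (g p.2.1) p.1.length = p.1)) :=
          (Primrec.eq.decide.to_comp).comp
            (hpre.comp (Computable.pair (Computable.fst.comp Computable.snd)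
              (Primrec.list_length.to_comp.comp Computable.fst)))
            Computable.fst
        have := Computable.cond (c := fun p : List Bool × (ℕ × Option ℕ) =>
            decide (prefixList (g p.2.1) p.1.length = p.1))
          (f := fun p : List Bool × (ℕ × Option ℕ) => (Option.some p.2.1 : Option ℕ))
          (g := fun _ => (Option.none : Option ℕ))
          hbeq (Computable.option_some.comp (Computable.fst.comp Computable.snd))
          (Computable.const Option.none)
        refine this.of_eq fun p => ?_
        by_cases h : prefixList (g p.2.1) p.1.length = p.1 <;> simp [h]
      have := Computable.nat_rec (f := fun l : List Bool => l.length + 1)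
        (g := fun _ : List Bool => (Option.none : Option ℕ))
        (h := fun (l : List Bool) (y : ℕ × Option ℕ) =>
          y.2.or (if prefixList (g y.1) l.length = l then Option.some y.1 else Option.none))
        (Computable.succ.comp (Primrec.list_length.to_comp))
        (Computable.const Option.none)
        ((hor.comp (Computable.snd.comp Computable.snd) hcond).to₂)
      exact this.of_eq fun l => keysearch l (l.length + 1)
    have := Computable.option_casesOn (o := fun l : List Bool => searchAux g l (l.length + 1))
      (f := fun _ : List Bool => false)
      (g := fun (l : List Bool) (j : ℕ) => g j l.length)
      hsearch (Computable.const false)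
      (hg.comp (Computable.pair Computable.snd
        (Primrec.list_length.to_comp.comp Computable.fst))).to₂
    refine this.of_eq fun l => ?_
    unfold predictor
    rcases h' : searchAux g l (l.length + 1) with _ | j <;> simp [h', Option.elim]
  · -- correctness
    rintro ω ⟨k, rfl⟩
    set ω := g k with hω
    have hsome : ∀ n ≥ k, ∃ j, searchAux g (prefixList ω n) (n + 1) = some j := by
      intro n hn
      have := searchAux_isSome g (prefixList ω n) (n + 1)
        ⟨k, by omega, by rw [prefixList_length]⟩
      exact Option.isSome_iff_exists.mp this
    choose J hJ using fun n : ℕ => hsome (n + k) (by omega)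
    have hJprop : ∀ n, prefixList (g (J n)) (n + k) = prefixList ω (n + k) ∧
        ∀ i < J n, prefixList (g i) (n + k) ≠ prefixList ω (n + k) := by
      intro n
      have := searchAux_sound g (prefixList ω (n + k)) (n + k + 1) (J n) (hJ n)
      rw [prefixList_length] at this
      exact ⟨this.2.1, this.2.2⟩
    have hJle : ∀ n, J n ≤ k := by
      intro n
      by_contra hlt
      exact (hJprop n).2 k (by omega) rfl
    have hrestrict : ∀ (j m₁ m₂ : ℕ), m₁ ≤ m₂ →
        prefixList (g j) m₂ = prefixList ω m₂ → prefixList (g j) m₁ = prefixList ω m₁ := by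
      intro j m₁ m₂ hm h
      rw [prefixList_eq_iff] at h ⊢
      intro i hi; exact h i (by omega)
    have hmono : Monotone J := by
      apply monotone_nat_of_le_succ
      intro n
      by_contra hlt
      push_neg at hlt
      exact (hJprop n).2 (J (n + 1)) hlt
        (hrestrict _ _ _ (by omega) (hJprop (n + 1)).1)
    have hbdd : BddAbove (Set.range J) := ⟨k, by rintro _ ⟨n, rfl⟩; exact hJle n⟩
    have hmem : sSup (Set.range J) ∈ Set.range J :=
      Nat.sSup_mem ⟨J 0, 0, rfl⟩ hbdd
    obtain ⟨m, hm⟩ := hmem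
    have hconst : ∀ n ≥ m, J n = J m := by
      intro n hn
      have h1 : J m ≤ J n := hmono hn
      have h2 : J n ≤ J m := by
        rw [hm]; exact le_csSup hbdd ⟨n, rfl⟩
      omega
    refine ⟨m + k, fun n hn => ?_⟩
    have hnk : n - k + k = n := by omega
    have hJn : J (n - k) = J m := hconst (n - k) (by omega)
    have hpred : predictor g (prefixList ω n) = g (J (n - k)) n := by
      unfold predictor
      rw [prefixList_length]
      have := hJ (n - k)
      rw [hnk] at this
      rw [this]
      rfl
    rw [hpred, hJn]
    have hcons : prefixList (g (J (n + 1 - k))) (n + 1) = prefixList ω (n + 1) := by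
      have := (hJprop (n + 1 - k)).1
      rwa [show n + 1 - k + k = n + 1 by omega] at this
    rw [show J m = J (n + 1 - k) from (hconst (n + 1 - k) (by omega)).symm]
    exact (prefixList_eq_iff _ _ (n + 1)).mp hcons n (by omega)
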